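/- Let A be an n×p real matrix (n > p) with rank p−m where 0 < m < p, and let B be an m×p real matrix with rank m whose rows are linearly independent of the rows of A, i.e. the (n+m)×p matrix obtained by stacking A on top of B has rank p. Then the p×p matrix AᵀA + BᵀB is invertible and B (AᵀA + BᵀB)⁻¹ Bᵀ = I_m, the m×m identity matrix. -/

import Mathlib

open Matrix

lemma aux_isUnit_of_rank_eq {p : ℕ} (M : Matrix (Fin p) (Fin p) ℝ) (h : M.rank = p) :
    IsUnit M := by
  rw [← Matrix.mulVec_surjective_iff_isUnit]
  have hrange : LinearMap.range M.mulVecLin = ⊤ := by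
    apply Submodule.eq_top_of_finrank_eq
    rw [Matrix.rank] at h
    simp [h]
  intro y
  obtain ⟨x, hx⟩ := LinearMap.range_eq_top.mp hrange y
  exact ⟨x, hx⟩

theorem stmt_1 (n p m : ℕ) (hnp : p < n) (hm : 0 < m) (hmp : m < p)
    (A : Matrix (Fin n) (Fin p) ℝ) (B : Matrix (Fin m) (Fin p) ℝ)
    (hA : A.rank = p - m) (hB : B.rank = m)
    (hAB : (Matrix.fromRows A B).rank = p) :
    IsUnit (Aᵀ * A + Bᵀ * B) ∧ B * (Aᵀ * A + Bᵀ * B)⁻¹ * Bᵀ = 1 := by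
  have hM : Aᵀ * A + Bᵀ * B = (fromRows A B)ᵀ * (fromRows A B) := by
    rw [transpose_fromRows, fromCols_mul_fromRows]
  have hMrank : (Aᵀ * A + Bᵀ * B).rank = p := by
    rw [hM, rank_transpose_mul_self]; exact hAB
  have hUnit : IsUnit (Aᵀ * A + Bᵀ * B) := aux_isUnit_of_rank_eq _ hMrank
  refine ⟨hUnit, ?_⟩
  set M := Aᵀ * A + Bᵀ * B with hMdef
  have hMM : M * M⁻¹ = 1 := mul_nonsing_inv _ ((Matrix.isUnit_iff_isUnit_det M).mp hUnit)
  -- key identity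
  have hkey : Aᵀ * (A * M⁻¹ * Bᵀ) + Bᵀ * (B * M⁻¹ * Bᵀ - 1) = 0 := by
    have h1 : (Aᵀ * A + Bᵀ * B) * (M⁻¹ * Bᵀ) = Bᵀ := by
      rw [← hMdef, ← Matrix.mul_assoc, hMM, Matrix.one_mul]
    calc Aᵀ * (A * M⁻¹ * Bᵀ) + Bᵀ * (B * M⁻¹ * Bᵀ - 1)
        = (Aᵀ * A + Bᵀ * B) * (M⁻¹ * Bᵀ) - Bᵀ := by
          rw [Matrix.add_mul, Matrix.mul_sub, Matrix.mul_one]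
          simp only [Matrix.mul_assoc]
          abel
      _ = 0 := by rw [h1, sub_self]
  -- row spaces
  set U : Submodule ℝ (Fin p → ℝ) := Submodule.span ℝ (Set.range A) with hU
  set V : Submodule ℝ (Fin p → ℝ) := Submodule.span ℝ (Set.range B) with hV
  have hUr : Module.finrank ℝ U = p - m := by
    rw [hU, show Set.range A = Set.range A.row from rfl, ← rank_eq_finrank_span_row]; exact hA
  have hVr : Module.finrank ℝ V = m := by
    rw [hV, show Set.range B = Set.range B.row from rfl, ← rank_eq_finrank_span_row]; exact hB
  have hsup : U ⊔ V = Submodule.span ℝ (Set.range (fromRows A B)) := by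
    rw [hU, hV, ← Submodule.span_union]
    congr 1
    ext x
    simp [fromRows, Set.range, Sum.exists]
    tauto
  have hsupr : Module.finrank ℝ (U ⊔ V : Submodule ℝ (Fin p → ℝ)) = p := by
    rw [hsup, show Set.range (fromRows A B) = Set.range (fromRows A B).row from rfl, ← rank_eq_finrank_span_row]; exact hAB
  have hinf : U ⊓ V = ⊥ := by
    have h := Submodule.finrank_sup_add_finrank_inf_eq U V
    rw [hsupr, hUr, hVr] at h
    have hpm : p - m + m = p := Nat.sub_add_cancel hmp.le
    rw [hpm] at h
    have : Module.finrank ℝ (U ⊓ V : Submodule ℝ (Fin p → ℝ)) = 0 := by omega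
    exact Submodule.finrank_eq_zero.mp this
  -- columns of Bᵀ * X are zero
  set X := B * M⁻¹ * Bᵀ - 1 with hX
  set Y := A * M⁻¹ * Bᵀ with hY
  have hBX : Bᵀ * X = 0 := by
    ext i j
    have hcolV : (fun i => (Bᵀ * X) i j) ∈ V := by
      rw [hV, show Set.range B = Set.range B.row from rfl, ← range_vecMulLinear]
      refine ⟨fun k => X k j, ?_⟩
      ext i
      simp [Matrix.vecMul, Matrix.mul_apply, dotProduct, transpose_apply,
        mul_comm]
    have hcolU : (fun i => (Bᵀ * X) i j) ∈ U := by
      have hAYU : (fun i => (Aᵀ * Y) i j) ∈ U := by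
        rw [hU, show Set.range A = Set.range A.row from rfl, ← range_vecMulLinear]
        refine ⟨fun k => Y k j, ?_⟩
        ext i
        simp [Matrix.vecMul, Matrix.mul_apply, dotProduct, transpose_apply,
          mul_comm]
      have heq : (fun i => (Bᵀ * X) i j) = -(fun i => (Aᵀ * Y) i j) := by
        funext i
        have := congrFun (congrFun hkey i) j
        simp only [Matrix.add_apply, Matrix.zero_apply] at this
        simp only [Pi.neg_apply]
        linarith
      rw [heq]
      exact neg_mem hAYU
    have : (fun i => (Bᵀ * X) i j) ∈ U ⊓ V := ⟨hcolU, hcolV⟩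
    rw [hinf] at this
    simpa using congrFun this i
  -- B * Bᵀ is invertible
  have hBBt : (B * Bᵀ).rank = m := by rw [rank_self_mul_transpose]; exact hB
  have hBBtUnit : IsUnit (B * Bᵀ) := aux_isUnit_of_rank_eq _ hBBt
  have hX0 : X = 0 := by
    have h2 : (B * Bᵀ) * X = 0 := by rw [Matrix.mul_assoc, hBX, Matrix.mul_zero]
    have h3 : (B * Bᵀ)⁻¹ * ((B * Bᵀ) * X) = 0 := by rw [h2, Matrix.mul_zero]
    rwa [← Matrix.mul_assoc, nonsing_inv_mul _ ((Matrix.isUnit_iff_isUnit_det _).mp hBBtUnit),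
      Matrix.one_mul] at h3
  have := sub_eq_zero.mp hX0
  exact this
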